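/- arXiv:1002.2005 — 3 statements merged into one kernel-verified Lean document; each statement's English description precedes it below -/
import Mathlib

section
/- Let k be a field of characteristic zero and ∂ a derivation on k. Let g, h be invertible n×n matrices over k such that every entry of h and every entry of g⁻¹·h·g is a constant of ∂ (i.e., is annihilated by ∂). Then the matrix ∂(g)·g⁻¹ commutes with h, that is, ∂(g)·g⁻¹·h = h·∂(g)·g⁻¹, where ∂(g) denotes the matrix obtained by applying ∂ to each entry of g. -/
/-- Key computational step in the proof of Lemma 7.2 of
"Projective Isomonodromy and Galois Groups" (Mitschi–Singer): if `h` and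
`g⁻¹·h·g` both have all entries annihilated by a derivation `δ` of `k`, then
`δ(g)·g⁻¹` commutes with `h`. -/
theorem deriv_conj_const_commutes {n : ℕ} {k : Type*} [Field k] [CharZero k]
    (δ : k → k)
    (hadd : ∀ a b : k, δ (a + b) = δ a + δ b)
    (hmul : ∀ a b : k, δ (a * b) = δ a * b + a * δ b)
    (g h : GL (Fin n) k)
    (hh : ∀ i j, δ ((h : Matrix (Fin n) (Fin n) k) i j) = 0)
    (hconj : ∀ i j, δ (((g⁻¹ * h * g : GL (Fin n) k) : Matrix (Fin n) (Fin n) k) i j) = 0) :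
    ((g : Matrix (Fin n) (Fin n) k).map δ * (g⁻¹ : GL (Fin n) k)) * (h : Matrix (Fin n) (Fin n) k)
      = (h : Matrix (Fin n) (Fin n) k) *
        ((g : Matrix (Fin n) (Fin n) k).map δ * (g⁻¹ : GL (Fin n) k)) := by
  have hzero : δ 0 = 0 := by
    have := hadd 0 0
    simp at this
    exact this
  -- Leibniz rule for matrix products
  have leib : ∀ A B : Matrix (Fin n) (Fin n) k,
      (A * B).map δ = A.map δ * B + A * B.map δ := by
    intro A B
    ext i j
    simp only [Matrix.map_apply, Matrix.mul_apply, Matrix.add_apply]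
    rw [show δ (∑ x, A i x * B x j) = ∑ x, δ (A i x * B x j) from by
      classical
      induction (Finset.univ : Finset (Fin n)) using Finset.induction with
      | empty => simpa using hzero
      | @insert _ _ hx ih => rw [Finset.sum_insert hx, Finset.sum_insert hx, hadd, ih]]
    rw [← Finset.sum_add_distrib]
    exact Finset.sum_congr rfl fun x _ => hmul _ _
  set G : Matrix (Fin n) (Fin n) k := (g : Matrix (Fin n) (Fin n) k)
  set H : Matrix (Fin n) (Fin n) k := (h : Matrix (Fin n) (Fin n) k)
  set Gi : Matrix (Fin n) (Fin n) k := ((g⁻¹ : GL (Fin n) k) : Matrix (Fin n) (Fin n) k)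
  have hGGi : G * Gi = 1 := by
    rw [show G * Gi = ((g * g⁻¹ : GL (Fin n) k) : Matrix (Fin n) (Fin n) k) from
      (Units.val_mul _ _).symm, mul_inv_cancel]; rfl
  have hGiG : Gi * G = 1 := by
    rw [show Gi * G = ((g⁻¹ * g : GL (Fin n) k) : Matrix (Fin n) (Fin n) k) from
      (Units.val_mul _ _).symm, inv_mul_cancel]; rfl
  have hHmap : H.map δ = 0 := by
    ext i j; simpa [Matrix.map_apply] using hh i j
  have hCmap : (Gi * H * G).map δ = 0 := by
    ext i j
    have := hconj i j
    simpa [Gi, H, G, Matrix.map_apply, Units.val_mul] using this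
  -- H * G = G * (Gi * H * G)
  have key : H * G.map δ = G.map δ * (Gi * H * G) := by
    have e1 : (H * G).map δ = H * G.map δ := by
      rw [leib, hHmap]; simp
    have e2 : (G * (Gi * H * G)).map δ = G.map δ * (Gi * H * G) := by
      rw [leib, hCmap]; simp
    have e3 : H * G = G * (Gi * H * G) := by
      rw [← mul_assoc, ← mul_assoc, hGGi, one_mul]
    rw [← e1, e3, e2]
  calc G.map δ * Gi * H
      = G.map δ * (Gi * H * G) * Gi := by
        simp only [mul_assoc, hGGi, mul_one]
    _ = H * G.map δ * Gi := by rw [← key]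
    _ = H * (G.map δ * Gi) := by rw [mul_assoc]
end

section
/- Let k be a field of characteristic zero, let ∂₁, …, ∂_r be pairwise commuting derivations on k, and let C = {x ∈ k : ∂ᵢ(x) = 0 for all i} be the field of common constants. Let H be a subgroup of GL_n(k) all of whose elements have all their entries in C, and assume H is irreducible in the strong sense that every n×n matrix over k commuting with all elements of H is a scalar multiple of the identity. Assume moreover that k has the following solvability property: for all z₁, …, z_r ∈ k satisfying ∂ᵢ(z_j) = ∂_j(zᵢ) for all i, j, there exists a nonzero u ∈ k with ∂ᵢ(u) = zᵢ·u for all i. If g ∈ GL_n(k) normalizes H (i.e., g⁻¹·h·g ∈ H and g·h·g⁻¹ ∈ H for all h ∈ H), then there exist a nonzero scalar u ∈ k and a matrix h₀ ∈ GL_n(k) with all entries in C such that g = u·h₀. -/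
/-- Abstract form of Lemma 7.2 of "Projective Isomonodromy and Galois Groups"
(Mitschi–Singer): if `H ⊆ GL_n(k)` has constant entries and is irreducible in
the sense of Schur, `k` satisfies the integrable-system solvability property,
and `g` normalizes `H`, then `g = u·h₀` with `u` a nonzero scalar and `h₀` a
matrix with constant entries. -/
theorem normalizer_of_irreducible_constant_group {n r : ℕ}
    {k : Type*} [Field k] [CharZero k]
    (δ : Fin r → k → k)
    (hadd : ∀ i, ∀ a b : k, δ i (a + b) = δ i a + δ i b)
    (hmul : ∀ i, ∀ a b : k, δ i (a * b) = δ i a * b + a * δ i b)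
    (hcomm : ∀ i j, ∀ a : k, δ i (δ j a) = δ j (δ i a))
    (H : Subgroup (GL (Fin n) k))
    (hHconst : ∀ h ∈ H, ∀ a b, ∀ i, δ i ((h : Matrix (Fin n) (Fin n) k) a b) = 0)
    (hHirr : ∀ M : Matrix (Fin n) (Fin n) k,
      (∀ h ∈ H, M * (h : Matrix (Fin n) (Fin n) k) = (h : Matrix (Fin n) (Fin n) k) * M) →
        ∃ c : k, M = c • (1 : Matrix (Fin n) (Fin n) k))
    (hsolv : ∀ z : Fin r → k, (∀ i j, δ i (z j) = δ j (z i)) →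
        ∃ u : k, u ≠ 0 ∧ ∀ i, δ i u = z i * u)
    (g : GL (Fin n) k)
    (hnorm : ∀ h ∈ H, g⁻¹ * h * g ∈ H ∧ g * h * g⁻¹ ∈ H) :
    ∃ u : k, u ≠ 0 ∧ ∃ h₀ : GL (Fin n) k,
      (∀ a b, ∀ i, δ i ((h₀ : Matrix (Fin n) (Fin n) k) a b) = 0) ∧
        (g : Matrix (Fin n) (Fin n) k) = u • (h₀ : Matrix (Fin n) (Fin n) k) := by
  classical
  rcases Nat.eq_zero_or_pos n with hn | hn
  · subst hn
    exact ⟨1, one_ne_zero, g, fun a => a.elim0, (one_smul _ _).symm⟩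
  -- basic derivation facts
  have hδ0 : ∀ i, δ i (0 : k) = 0 := by
    intro i
    have h := hadd i 0 0
    rw [add_zero] at h
    have h2 : δ i (0 : k) + 0 = δ i 0 + δ i 0 := by rw [add_zero]; exact h
    exact (add_left_cancel h2).symm
  have hδ1 : ∀ i, δ i (1 : k) = 0 := by
    intro i
    have h := hmul i 1 1
    rw [mul_one, one_mul, mul_one] at h
    have h2 : δ i (1 : k) + 0 = δ i 1 + δ i 1 := by rw [add_zero]; exact h
    exact (add_left_cancel h2).symm
  set φ : Fin r → (k →+ k) := fun i => AddMonoidHom.mk' (δ i) (hadd i) with hφ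
  -- Leibniz rule for matrix products
  have Dmul : ∀ i (A B : Matrix (Fin n) (Fin n) k),
      (A * B).map (δ i) = A.map (δ i) * B + A * B.map (δ i) := by
    intro i A B
    ext a b
    simp only [Matrix.map_apply, Matrix.mul_apply, Matrix.add_apply]
    have hsum : δ i (∑ c, A a c * B c b) = ∑ c, δ i (A a c * B c b) :=
      map_sum (φ i) (fun c => A a c * B c b) Finset.univ
    rw [hsum, ← Finset.sum_add_distrib]
    exact Finset.sum_congr rfl fun c _ => hmul i _ _
  have Done : ∀ i, (1 : Matrix (Fin n) (Fin n) k).map (δ i) = 0 := by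
    intro i
    ext a b
    simp [Matrix.map_apply, Matrix.one_apply, apply_ite (δ i), hδ0 i, hδ1 i]
  set G : Matrix (Fin n) (Fin n) k := (g : Matrix (Fin n) (Fin n) k) with hG
  set Gi : Matrix (Fin n) (Fin n) k := ((g⁻¹ : GL (Fin n) k) : Matrix (Fin n) (Fin n) k) with hGi
  have hGGi : G * Gi = 1 := g.mul_inv
  have hGiG : Gi * G = 1 := g.inv_mul
  -- derivative of the inverse
  have hDGi : ∀ i, Gi.map (δ i) = -(Gi * G.map (δ i) * Gi) := by
    intro i
    have h0 : (G * Gi).map (δ i) = 0 := by rw [hGGi]; exact Done i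
    rw [Dmul i G Gi] at h0
    have h1 : G * Gi.map (δ i) = -(G.map (δ i) * Gi) := by
      rw [add_comm] at h0
      exact eq_neg_of_add_eq_zero_left h0
    calc Gi.map (δ i) = (Gi * G) * Gi.map (δ i) := by rw [hGiG, one_mul]
      _ = Gi * (G * Gi.map (δ i)) := by rw [mul_assoc]
      _ = Gi * -(G.map (δ i) * Gi) := by rw [h1]
      _ = -(Gi * G.map (δ i) * Gi) := by rw [mul_neg, mul_assoc]
  -- zero derivative for constant matrices
  have hDH : ∀ i, ∀ h' : GL (Fin n) k, h' ∈ H →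
      ((h' : Matrix (Fin n) (Fin n) k)).map (δ i) = 0 := by
    intro i h' hh'
    ext a b
    simp only [Matrix.map_apply, Matrix.zero_apply]
    exact hHconst h' hh' a b i
  -- the logarithmic derivatives commute with H
  have key : ∀ i, ∀ h' ∈ H,
      (G.map (δ i) * Gi) * (h' : Matrix (Fin n) (Fin n) k)
        = (h' : Matrix (Fin n) (Fin n) k) * (G.map (δ i) * Gi) := by
    intro i h' hh'
    obtain ⟨hmem, -⟩ := hnorm h' hh'
    set h : GL (Fin n) k := g⁻¹ * h' * g with hh
    have hval : (h' : Matrix (Fin n) (Fin n) k)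
        = G * (h : Matrix (Fin n) (Fin n) k) * Gi := by
      have e : h' = g * h * g⁻¹ := by rw [hh]; group
      rw [e]
      simp [Units.val_mul, hG, hGi, mul_assoc]
    have hvalh : (h : Matrix (Fin n) (Fin n) k)
        = Gi * (h' : Matrix (Fin n) (Fin n) k) * G := by
      rw [hh]
      simp [Units.val_mul, hG, hGi, mul_assoc]
    have hDh : ((h : Matrix (Fin n) (Fin n) k)).map (δ i) = 0 := hDH i h hmem
    have hDh' : ((h' : Matrix (Fin n) (Fin n) k)).map (δ i) = 0 := hDH i h' hh'
    have e0 : (0 : Matrix (Fin n) (Fin n) k)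
        = G.map (δ i) * (h : Matrix (Fin n) (Fin n) k) * Gi
          + G * (h : Matrix (Fin n) (Fin n) k) * Gi.map (δ i) := by
      have e1 := congrArg (fun M : Matrix (Fin n) (Fin n) k => M.map (δ i)) hval
      simp only [Dmul i, hDh, hDh', mul_zero, add_zero, zero_mul] at e1
      exact e1
    -- substitute the inverse's derivative
    have e2 : G.map (δ i) * (h : Matrix (Fin n) (Fin n) k) * Gi
        = G * (h : Matrix (Fin n) (Fin n) k) * (Gi * G.map (δ i) * Gi) := by
      have t := e0
      rw [hDGi i, mul_neg] at t
      exact add_neg_eq_zero.mp t.symm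
    have hGih' : Gi * (h' : Matrix (Fin n) (Fin n) k)
        = (h : Matrix (Fin n) (Fin n) k) * Gi := by
      calc Gi * (h' : Matrix (Fin n) (Fin n) k)
          = Gi * (h' : Matrix (Fin n) (Fin n) k) * (G * Gi) := by rw [hGGi, mul_one]
        _ = (Gi * (h' : Matrix (Fin n) (Fin n) k) * G) * Gi := by rw [← mul_assoc]
        _ = (h : Matrix (Fin n) (Fin n) k) * Gi := by rw [← hvalh]
    calc (G.map (δ i) * Gi) * (h' : Matrix (Fin n) (Fin n) k)
        = G.map (δ i) * (Gi * (h' : Matrix (Fin n) (Fin n) k)) := by rw [mul_assoc]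
      _ = G.map (δ i) * ((h : Matrix (Fin n) (Fin n) k) * Gi) := by rw [hGih']
      _ = G.map (δ i) * (h : Matrix (Fin n) (Fin n) k) * Gi := by rw [mul_assoc]
      _ = G * (h : Matrix (Fin n) (Fin n) k) * (Gi * G.map (δ i) * Gi) := e2
      _ = (G * (h : Matrix (Fin n) (Fin n) k) * Gi) * (G.map (δ i) * Gi) := by
          simp only [mul_assoc]
      _ = (h' : Matrix (Fin n) (Fin n) k) * (G.map (δ i) * Gi) := by rw [← hval]
  -- get the scalars z i
  have hz : ∀ i, ∃ c : k, G.map (δ i) * Gi = c • (1 : Matrix (Fin n) (Fin n) k) :=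
    fun i => hHirr _ (fun h' hh' => key i h' hh')
  choose z hzspec using hz
  have hDG : ∀ i, G.map (δ i) = z i • G := by
    intro i
    calc G.map (δ i) = G.map (δ i) * (Gi * G) := by rw [hGiG, mul_one]
      _ = (G.map (δ i) * Gi) * G := by rw [mul_assoc]
      _ = (z i • (1 : Matrix (Fin n) (Fin n) k)) * G := by rw [hzspec i]
      _ = z i • G := by rw [Matrix.smul_mul, one_mul]
  have hent : ∀ i a b, δ i (G a b) = z i * G a b := by
    intro i a b
    have e := congrFun (congrFun (hDG i) a) b
    simpa [Matrix.map_apply, Matrix.smul_apply, smul_eq_mul] using e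
  -- nonzero entry of G
  obtain ⟨a0, b0, hab⟩ : ∃ a b, G a b ≠ 0 := by
    by_contra hcon
    push_neg at hcon
    have h1 := congrFun (congrFun hGGi ⟨0, hn⟩) ⟨0, hn⟩
    rw [Matrix.mul_apply] at h1
    simp [hcon, Matrix.one_apply] at h1
  -- integrability
  have hzcomm : ∀ i j, δ i (z j) = δ j (z i) := by
    intro i j
    have e1 : δ i (δ j (G a0 b0)) = δ i (z j) * G a0 b0 + z j * (z i * G a0 b0) := by
      rw [hent j, hmul i, hent i]
    have e2 : δ j (δ i (G a0 b0)) = δ j (z i) * G a0 b0 + z i * (z j * G a0 b0) := by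
      rw [hent i, hmul j, hent j]
    have e := hcomm i j (G a0 b0)
    rw [e1, e2] at e
    have h3 : δ i (z j) * G a0 b0 = δ j (z i) * G a0 b0 := by linear_combination e
    exact mul_right_cancel₀ hab h3
  obtain ⟨u, hu, hui⟩ := hsolv z hzcomm
  have huinv : ∀ i, δ i u⁻¹ = -(z i) * u⁻¹ := by
    intro i
    have h1 : δ i (u * u⁻¹) = 0 := by rw [mul_inv_cancel₀ hu]; exact hδ1 i
    rw [hmul i, hui i, mul_assoc, mul_inv_cancel₀ hu, mul_one] at h1
    have h2 : u * δ i u⁻¹ = -(z i) := by linear_combination h1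
    have h3 : u * δ i u⁻¹ = u * (-(z i) * u⁻¹) := by
      rw [h2, mul_comm (-(z i)) u⁻¹, ← mul_assoc, mul_inv_cancel₀ hu, one_mul]
    exact mul_left_cancel₀ hu h3
  refine ⟨u, hu, ⟨u⁻¹ • G, u • Gi, ?_, ?_⟩, ?_, ?_⟩
  · rw [Matrix.smul_mul, Matrix.mul_smul, smul_smul, inv_mul_cancel₀ hu, one_smul, hGGi]
  · rw [Matrix.smul_mul, Matrix.mul_smul, smul_smul, mul_inv_cancel₀ hu, one_smul, hGiG]
  · intro a b i
    show δ i ((u⁻¹ • G) a b) = 0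
    rw [Matrix.smul_apply, smul_eq_mul, hmul i, huinv i, hent i]
    ring
  · show G = u • (u⁻¹ • G)
    rw [smul_smul, mul_inv_cancel₀ hu, one_smul]
end

section
/- Let k be a field of characteristic zero with a derivation d, let x₁, x₂, x₃ ∈ k be pairwise distinct, and suppose there exists s ∈ k such that d(xᵢ) = xᵢ² + s for i = 1, 2, 3 (so that d(xᵢ) − d(x_j) = xᵢ² − x_j² for all i, j). Let μ ∈ k be a constant of d (d(μ) = 0), set σ = x₁ + x₂ + x₃, and set b₁ = μ/((x₁ − x₂)(x₁ − x₃)). Then d(b₁) = −(x₁ + σ)·μ/((x₁ − x₂)(x₁ − x₃)), i.e., d(b₁) = −α₁·μ where α₁ = (x₁ + σ)/((x₁ − x₂)(x₁ − x₃)). -/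
/-- The "easy computation" `b₁' = −α₁·μ` at the end of Section 5 of
"Projective Isomonodromy and Galois Groups" (Mitschi–Singer): if `x₁, x₂, x₃`
satisfy Halphen's equation `d(xᵢ) = xᵢ² + s` (same `s` for all `i`) and `μ` is a
constant, then `b₁ = μ/((x₁−x₂)(x₁−x₃))` satisfies
`d(b₁) = −(x₁+σ)·μ/((x₁−x₂)(x₁−x₃))` with `σ = x₁+x₂+x₃`. -/
theorem halphen_b_derivative {k : Type*} [Field k] [CharZero k]
    (d : k → k)
    (hadd : ∀ a b : k, d (a + b) = d a + d b)
    (hmul : ∀ a b : k, d (a * b) = d a * b + a * d b)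
    (x₁ x₂ x₃ : k) (h12 : x₁ ≠ x₂) (h13 : x₁ ≠ x₃) (h23 : x₂ ≠ x₃)
    (s : k)
    (hx₁ : d x₁ = x₁ ^ 2 + s) (hx₂ : d x₂ = x₂ ^ 2 + s) (hx₃ : d x₃ = x₃ ^ 2 + s)
    (μ : k) (hμ : d μ = 0)
    (σ : k) (hσ : σ = x₁ + x₂ + x₃)
    (b₁ : k) (hb₁ : b₁ = μ / ((x₁ - x₂) * (x₁ - x₃))) :
    d b₁ = -((x₁ + σ) * μ / ((x₁ - x₂) * (x₁ - x₃))) := by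
  subst hσ
  have h12' : x₁ - x₂ ≠ 0 := sub_ne_zero.mpr h12
  have h13' : x₁ - x₃ ≠ 0 := sub_ne_zero.mpr h13
  have hD : (x₁ - x₂) * (x₁ - x₃) ≠ 0 := mul_ne_zero h12' h13'
  have h0 : d 0 = 0 := by
    have := hadd 0 0; simpa using this
  have hneg : ∀ a : k, d (-a) = -d a := by
    intro a
    have h := hadd a (-a)
    rw [add_neg_cancel, h0] at h
    linear_combination -h
  have hsub : ∀ a b : k, d (a - b) = d a - d b := by
    intro a b
    rw [sub_eq_add_neg, hadd, hneg, sub_eq_add_neg]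
  have hbD : b₁ * ((x₁ - x₂) * (x₁ - x₃)) = μ := by
    rw [hb₁]; field_simp
  have key := hmul b₁ ((x₁ - x₂) * (x₁ - x₃))
  rw [hbD, hμ, hmul (x₁ - x₂) (x₁ - x₃), hsub, hsub, hx₁, hx₂, hx₃] at key
  rw [show -((x₁ + (x₁ + x₂ + x₃)) * μ / ((x₁ - x₂) * (x₁ - x₃)))
      = (-((x₁ + (x₁ + x₂ + x₃)) * μ)) / ((x₁ - x₂) * (x₁ - x₃)) by ring,
    eq_div_iff hD]
  linear_combination -key - (x₁ + (x₁ + x₂ + x₃)) * hbD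
end
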